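/- In the Musical Chairs seating process with $N$ target cells and $N$ players, if $u \in \{1,\dots,N\}$ players are unseated (so exactly $u$ cells are free) and each unseated player independently picks a cell uniformly at random from the $N$ cells, then the expected number of players that become seated in this round equals $\Delta(u) = \frac{u^2}{N}\left(1-\frac{1}{N}\right)^{u-1}$. -/

import Mathlib

open Finset

lemma count_exact_one (N u : ℕ) (c : Fin N) :
    (Finset.univ.filter (fun f : Fin u → Fin N =>
      (Finset.univ.filter (fun i : Fin u => f i = c)).card = 1)).card
    = u * (N - 1) ^ (u - 1) := by
  have hset : (Finset.univ.filter (fun f : Fin u → Fin N =>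
      (Finset.univ.filter (fun i : Fin u => f i = c)).card = 1))
    = Finset.univ.biUnion (fun i : Fin u =>
        Fintype.piFinset (fun j => if j = i then ({c} : Finset (Fin N)) else {c}ᶜ)) := by
    ext f
    simp only [mem_filter, mem_univ, true_and, mem_biUnion, Fintype.mem_piFinset]
    constructor
    · intro h
      obtain ⟨i, hi⟩ := Finset.card_eq_one.mp h
      refine ⟨i, fun j => ?_⟩
      by_cases hj : j = i
      · subst hj
        have : j ∈ Finset.univ.filter (fun i : Fin u => f i = c) := by
          rw [hi]; exact Finset.mem_singleton_self j
        simp only [mem_filter] at this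
        simp [this.2]
      · have : j ∉ Finset.univ.filter (fun i : Fin u => f i = c) := by
          rw [hi]; simpa using hj
        simp only [mem_filter, mem_univ, true_and] at this
        simp [hj, this]
    · rintro ⟨i, hi⟩
      have : Finset.univ.filter (fun j : Fin u => f j = c) = {i} := by
        ext j
        simp only [mem_filter, mem_univ, true_and, mem_singleton]
        have hj := hi j
        by_cases h : j = i
        · subst h; simp at hj; simp [hj]
        · simp [h] at hj; simp [h]
          simpa using hj
      rw [this, Finset.card_singleton]
  rw [hset, Finset.card_biUnion]
  · have hcard : ∀ i : Fin u,
        (Fintype.piFinset (fun j => if j = i then ({c} : Finset (Fin N)) else {c}ᶜ)).card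
        = (N - 1) ^ (u - 1) := by
      intro i
      rw [Fintype.card_piFinset]
      rw [← Finset.mul_prod_erase _ _ (Finset.mem_univ i)]
      simp only [if_pos rfl, if_true, Finset.card_singleton, one_mul]
      have : ∀ j ∈ Finset.univ.erase i,
          ((if j = i then ({c} : Finset (Fin N)) else {c}ᶜ)).card = N - 1 := by
        intro j hj
        rw [if_neg (Finset.ne_of_mem_erase hj)]
        simp [Finset.card_compl]
      rw [Finset.prod_congr rfl this, Finset.prod_const,
        Finset.card_erase_of_mem (Finset.mem_univ i), Finset.card_univ, Fintype.card_fin]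
    simp only [hcard, Finset.sum_const, Finset.card_univ, Fintype.card_fin, smul_eq_mul]
  · intro i _ i' _ hii'
    simp only [Function.onFun]
    rw [Finset.disjoint_left]
    intro f hf hf'
    rw [Fintype.mem_piFinset] at hf hf'
    have h1 := hf i
    have h2 := hf' i
    simp only [if_pos rfl, if_true, Finset.mem_singleton] at h1
    simp only [if_neg hii', Finset.mem_compl, Finset.mem_singleton] at h2
    exact h2 h1

/-- In Musical Chairs with `N` cells and a set `F` of `u` free cells,
when `u` unseated players each pick a cell uniformly from all `N` cells independently,
the expected number of newly seated players (free cells picked by exactly one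
unseated player) equals `(u^2/N)(1-1/N)^(u-1)`. -/
theorem musical_chairs_drift_formula
    (N u : ℕ) (hu : 1 ≤ u) (huN : u ≤ N)
    (F : Finset (Fin N)) (hF : F.card = u) :
    (∑ f : Fin u → Fin N,
        ((F.filter (fun c =>
          (Finset.univ.filter (fun i : Fin u => f i = c)).card = 1)).card : ℝ))
      / (N : ℝ) ^ u
    = ((u : ℝ) ^ 2 / N) * (1 - 1 / (N : ℝ)) ^ (u - 1) := by
  have hN : 1 ≤ N := le_trans hu huN
  have hN0 : (N : ℝ) ≠ 0 := by positivity
  have key : ∑ f : Fin u → Fin N, (F.filter (fun c =>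
      (Finset.univ.filter (fun i : Fin u => f i = c)).card = 1)).card
    = u * u * (N - 1) ^ (u - 1) := by
    rw [Finset.sum_congr rfl (fun f _ => Finset.card_filter _ _), Finset.sum_comm]
    have : ∀ c ∈ F, (∑ f : Fin u → Fin N,
        if (Finset.univ.filter (fun i : Fin u => f i = c)).card = 1 then 1 else 0)
        = u * (N - 1) ^ (u - 1) := by
      intro c _
      rw [← Finset.card_filter]
      exact count_exact_one N u c
    rw [Finset.sum_congr rfl this, Finset.sum_const, hF, smul_eq_mul, ← mul_assoc]
  have hcast : (∑ f : Fin u → Fin N,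
        ((F.filter (fun c =>
          (Finset.univ.filter (fun i : Fin u => f i = c)).card = 1)).card : ℝ))
      = ((u : ℝ) * u * ((N : ℝ) - 1) ^ (u - 1)) := by
    rw [← Nat.cast_sum, key]
    push_cast [Nat.cast_sub hN]
    ring
  rw [hcast]
  have h1 : (1 - 1 / (N : ℝ)) = ((N : ℝ) - 1) / N := by field_simp
  have h2 : (N : ℝ) ^ u = N * N ^ (u - 1) := by
    conv_lhs => rw [show u = (u - 1) + 1 from (Nat.succ_pred_eq_of_pos hu).symm]
    rw [pow_succ]
    ring
  rw [h1, h2, div_pow, div_mul_div_comm]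
  congr 1
  ring
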